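/- Let K be a field (an algebraic number field or p-adic field) and Q a quaternion algebra over K. If A, B are elements of Q with the same reduced norm and reduced trace, and the trace squared is not equal to 4 times the norm, then there exists an invertible element J of Q with J*A*J⁻¹ = B. -/

import Mathlib

open scoped Quaternion Classical

private lemma myinv {K : Type} [Field K] {c₁ c₂ : K} (x1 x2 x3 : K)
    (h : c₁*x1^2 + c₂*x2^2 - c₁*c₂*x3^2 ≠ 0) :
    (⟨0,x1,x2,x3⟩ : ℍ[K,c₁,c₂]) *
      ⟨0, x1/(c₁*x1^2 + c₂*x2^2 - c₁*c₂*x3^2), x2/(c₁*x1^2 + c₂*x2^2 - c₁*c₂*x3^2),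
        x3/(c₁*x1^2 + c₂*x2^2 - c₁*c₂*x3^2)⟩ = 1 ∧
    (⟨0, x1/(c₁*x1^2 + c₂*x2^2 - c₁*c₂*x3^2), x2/(c₁*x1^2 + c₂*x2^2 - c₁*c₂*x3^2),
        x3/(c₁*x1^2 + c₂*x2^2 - c₁*c₂*x3^2)⟩ : ℍ[K,c₁,c₂]) * ⟨0,x1,x2,x3⟩ = 1 := by
  constructor <;> ext <;>
    simp only [QuaternionAlgebra.re_mul, QuaternionAlgebra.imI_mul, QuaternionAlgebra.imJ_mul,
      QuaternionAlgebra.imK_mul, QuaternionAlgebra.re_one, QuaternionAlgebra.imI_one,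
      QuaternionAlgebra.imJ_one, QuaternionAlgebra.imK_one] <;>
    field_simp <;> ring

private lemma myinv2 {K : Type} [Field K] {c₁ c₂ : K} (x1 x2 x3 : K)
    (h : c₁*x1^2 + c₂*x2^2 - c₁*c₂*x3^2 ≠ 0) :
    ∃ y : ℍ[K,c₁,c₂], (⟨0,x1,x2,x3⟩ : ℍ[K,c₁,c₂]) * y = 1 ∧ y * ⟨0,x1,x2,x3⟩ = 1 :=
  ⟨_, (myinv x1 x2 x3 h).1, (myinv x1 x2 x3 h).2⟩

/-- `K` is a p-adic field: a finite extension of `ℚ_[p]` for some prime `p`. -/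
def IsPAdicField (K : Type) [Field K] : Prop :=
  ∃ p : ℕ, ∃ hp : p.Prime,
    letI : Fact p.Prime := ⟨hp⟩
    ∃ f : ℚ_[p] →+* K, letI := f.toAlgebra; FiniteDimensional ℚ_[p] K

theorem stmt0 (K : Type) [Field K] (hK : NumberField K ∨ IsPAdicField K)
    (c₁ c₂ : K) (hc₁ : c₁ ≠ 0) (hc₂ : c₂ ≠ 0)
    (A B : ℍ[K, c₁, c₂])
    (hN : A * star A = B * star B) (hS : A + star A = B + star B)
    (hsep : (A + star A) ^ 2 ≠ 4 * (A * star A)) :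
    ∃ J : ℍ[K, c₁, c₂]ˣ, (J : ℍ[K, c₁, c₂]) * A * (J⁻¹ : ℍ[K, c₁, c₂]ˣ) = B := by
  haveI : CharZero K := by
    rcases hK with h | ⟨p, hp, f, _⟩
    · exact h.to_charZero
    · haveI : Fact p.Prime := ⟨hp⟩
      refine ⟨fun a b h => ?_⟩
      have : f (a : ℚ_[p]) = f (b : ℚ_[p]) := by simpa [map_natCast] using h
      exact_mod_cast f.injective this
  obtain ⟨a0, a1, a2, a3⟩ := A
  obtain ⟨b0, b1, b2, b3⟩ := B
  have h0 : a0 = b0 := by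
    have h := congrArg QuaternionAlgebra.re hS
    simp at h
    linear_combination h / 2
  subst h0
  have hn : c₁*b1^2 + c₂*b2^2 - c₁*c₂*b3^2 = c₁*a1^2 + c₂*a2^2 - c₁*c₂*a3^2 := by
    have hNre := congrArg QuaternionAlgebra.re hN
    simp [QuaternionAlgebra.re_mul] at hNre
    linear_combination hNre
  have hd : c₁*a1^2 + c₂*a2^2 - c₁*c₂*a3^2 ≠ 0 := by
    intro h
    apply hsep
    have h4 : (4 : ℍ[K,c₁,c₂]) = (⟨4,0,0,0⟩ : ℍ[K,c₁,c₂]) := rfl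
    rw [pow_two, h4]
    ext <;> simp [QuaternionAlgebra.re_mul] <;>
      first | ring1 | linear_combination (4:K) * h
  set α : ℍ[K,c₁,c₂] := ⟨0,a1,a2,a3⟩ with hα
  set β : ℍ[K,c₁,c₂] := ⟨0,b1,b2,b3⟩ with hβ
  have hα2 : α * α = (⟨c₁*a1^2 + c₂*a2^2 - c₁*c₂*a3^2,0,0,0⟩ : ℍ[K,c₁,c₂]) := by
    ext <;> simp [QuaternionAlgebra.re_mul] <;> ring
  have hβ2 : β * β = (⟨c₁*a1^2 + c₂*a2^2 - c₁*c₂*a3^2,0,0,0⟩ : ℍ[K,c₁,c₂]) := by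
    ext <;> simp [QuaternionAlgebra.re_mul] <;> first | ring1 | linear_combination hn
  have hAs : (⟨a0,a1,a2,a3⟩ : ℍ[K,c₁,c₂]) = ⟨a0,0,0,0⟩ + α := by ext <;> simp [hα]
  have hBs : (⟨a0,b1,b2,b3⟩ : ℍ[K,c₁,c₂]) = ⟨a0,0,0,0⟩ + β := by ext <;> simp [hβ]
  have hscal : ∀ x : ℍ[K,c₁,c₂], (⟨a0,0,0,0⟩ : ℍ[K,c₁,c₂]) * x = x * ⟨a0,0,0,0⟩ := by
    intro x; ext <;> simp [QuaternionAlgebra.re_mul] <;> ring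
  suffices hmain : ∃ U V : ℍ[K,c₁,c₂], U * V = 1 ∧ V * U = 1 ∧ U * α = β * U by
    obtain ⟨U, V, h1, h2, h3⟩ := hmain
    refine ⟨⟨U, V, h1, h2⟩, ?_⟩
    rw [Units.mul_inv_eq_iff_eq_mul]
    show U * _ = _ * U
    rw [hAs, hBs, mul_add, add_mul, ← hscal U, h3]
  by_cases hde : (c₁*a1^2 + c₂*a2^2 - c₁*c₂*a3^2) + (c₁*a1*b1 + c₂*a2*b2 - c₁*c₂*a3*b3) = 0
  · -- degenerate case: J = γ * (α - β) for a suitable pure γ anticommuting with β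
    set C : ℍ[K,c₁,c₂] := ⟨0, a1-b1, a2-b2, a3-b3⟩ with hCdef
    have hCn : c₁*(a1-b1)^2 + c₂*(a2-b2)^2 - c₁*c₂*(a3-b3)^2 ≠ 0 := by
      intro h
      apply hd
      linear_combination h/4 - hn/4 + hde/2
    have hC : C = α - β := by ext <;> simp [hCdef, hα, hβ]
    have hCα : C * α = -(β * C) := by
      have hr : C * α + β * C = α * α - β * β := by rw [hC]; noncomm_ring
      have h00 : C * α + β * C = 0 := by rw [hr, hα2, hβ2, sub_self]
      exact eq_neg_of_add_eq_zero_left h00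
    obtain ⟨Ci, hc1, hc2⟩ := myinv2 (c₁ := c₁) (c₂ := c₂) (a1-b1) (a2-b2) (a3-b3) hCn
    have key : ∀ g1 g2 g3 : K, c₁*g1^2 + c₂*g2^2 - c₁*c₂*g3^2 ≠ 0 →
        (⟨0,g1,g2,g3⟩ : ℍ[K,c₁,c₂]) * β = -(β * ⟨0,g1,g2,g3⟩) →
        ∃ U V : ℍ[K,c₁,c₂], U * V = 1 ∧ V * U = 1 ∧ U * α = β * U := by
      intro g1 g2 g3 hgn hanti
      obtain ⟨gi, hg1, hg2⟩ := myinv2 (c₁ := c₁) (c₂ := c₂) g1 g2 g3 hgn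
      set γ : ℍ[K,c₁,c₂] := ⟨0,g1,g2,g3⟩
      refine ⟨γ * C, Ci * gi, ?_, ?_, ?_⟩
      · rw [mul_assoc, ← mul_assoc C, hc1, one_mul, hg1]
      · rw [mul_assoc, ← mul_assoc gi, hg2, one_mul, hc2]
      · rw [mul_assoc, hCα, mul_neg, ← mul_assoc, hanti, neg_mul, neg_neg, mul_assoc]
    by_cases hw1 : c₁*b1^2 + c₂*b2^2 = 0
    · by_cases hw2 : c₂*b3^2 - b1^2 = 0
      · by_cases hw3 : c₁*b3^2 - b2^2 = 0
        · exact absurd (by linear_combination hw1/2 - (c₁/2)*hw2 - (c₂/2)*hw3 - hn) hd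
        · refine key 0 (-(c₁*b3)) (-b2)
            (fun h => hw3 (mul_left_cancel₀ (mul_ne_zero hc₁ hc₂) (by linear_combination h)))
            ?_
          ext <;> simp <;> ring
      · refine key (-(c₂*b3)) 0 (-b1)
          (fun h => hw2 (mul_left_cancel₀ (mul_ne_zero hc₁ hc₂) (by linear_combination h)))
          ?_
        ext <;> simp <;> ring
    · refine key (-(c₂*b2)) (c₁*b1) 0
        (fun h => hw1 (mul_left_cancel₀ (mul_ne_zero hc₁ hc₂) (by linear_combination h)))
        ?_
      ext <;> simp <;> ring
  · have hJn : c₁*(a1+b1)^2 + c₂*(a2+b2)^2 - c₁*c₂*(a3+b3)^2 ≠ 0 := by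
      intro h
      apply hde
      linear_combination h/2 - hn/2
    obtain ⟨h1, h2⟩ := myinv (c₁ := c₁) (c₂ := c₂) (a1+b1) (a2+b2) (a3+b3) hJn
    refine ⟨⟨0, a1+b1, a2+b2, a3+b3⟩, _, h1, h2, ?_⟩
    have hJ : (⟨0, a1+b1, a2+b2, a3+b3⟩ : ℍ[K,c₁,c₂]) = α + β := by ext <;> simp [hα, hβ]
    rw [hJ]
    have hr : (α + β) * α - β * (α + β) = α * α - β * β := by noncomm_ring
    have h00 : (α + β) * α - β * (α + β) = 0 := by rw [hr, hα2, hβ2, sub_self]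
    linear_combination (norm := noncomm_ring) h00
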